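/- Let F be a 3×3 real matrix with det F > 0 and let λ, μ be real constants. Then the Piola–Kirchhoff stress map G ↦ P(G) = λ ln(det G) G⁻ᵀ + μ(G − G⁻ᵀ) is Fréchet differentiable at F, and its derivative applied to any 3×3 real matrix H equals λ trace(F⁻¹·H) F⁻ᵀ − λ ln(det F) F⁻ᵀ·Hᵀ·F⁻ᵀ + μ(H + F⁻ᵀ·Hᵀ·F⁻ᵀ). (This is the exact Piola stress tangent 𝔸 = ∂P/∂F = λ[fᵗ⊗fᵗ + ln J 𝔻] + μ[𝕀 − 𝔻] applied to H, used to compute the consistent tangent in the Newton–Raphson scheme.) -/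

import Mathlib

open Matrix

attribute [local instance] Matrix.normedAddCommGroup Matrix.normedSpace

namespace PiolaAux

noncomputable section

abbrev M3 := Matrix (Fin 3) (Fin 3) ℝ

lemma norm_mul_le3 (A B : M3) : ‖A * B‖ ≤ 3 * ‖A‖ * ‖B‖ := by
  have h : ∀ i j, ‖(A * B) i j‖ ≤ 3 * ‖A‖ * ‖B‖ := by
    intro i j
    calc ‖(A * B) i j‖ = ‖∑ k, A i k * B k j‖ := by rw [Matrix.mul_apply]
      _ ≤ ∑ k, ‖A i k * B k j‖ := norm_sum_le _ _
      _ ≤ ∑ _k : Fin 3, ‖A‖ * ‖B‖ := by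
          refine Finset.sum_le_sum fun k _ => ?_
          rw [norm_mul]
          exact mul_le_mul (norm_entry_le_entrywise_sup_norm A)
            (norm_entry_le_entrywise_sup_norm B) (norm_nonneg _) (norm_nonneg _)
      _ = 3 * ‖A‖ * ‖B‖ := by
          simp [Finset.sum_const]
          ring
  exact (Matrix.norm_le_iff (by positivity)).2 h

/-- Right-left multiplication as a continuous linear map. -/
def lmulRight (A B : M3) : M3 →L[ℝ] M3 :=
  LinearMap.toContinuousLinearMap
    { toFun := fun H => A * H * B
      map_add' := by intros; noncomm_ring
      map_smul' := by
        intros c H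
        simp [Matrix.mul_smul, Matrix.smul_mul] }

@[simp] lemma lmulRight_apply (A B H : M3) : lmulRight A B H = A * H * B := rfl

lemma inv_key (F H : M3) (hF : IsUnit F.det) (hFH : IsUnit (F + H).det) :
    (F + H)⁻¹ - F⁻¹ + F⁻¹ * H * F⁻¹
      = F⁻¹ * (H * (F⁻¹ * (H * (F + H)⁻¹))) := by
  have hf := Matrix.nonsing_inv_mul F hF
  have hg := Matrix.mul_nonsing_inv (F + H) hFH
  have e1 : F⁻¹ - (F + H)⁻¹ = F⁻¹ * (H * (F + H)⁻¹) := by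
    calc F⁻¹ - (F + H)⁻¹
        = F⁻¹ * ((F + H) * (F + H)⁻¹) - (F⁻¹ * F) * (F + H)⁻¹ := by
          rw [hg, hf]; simp
      _ = F⁻¹ * (H * (F + H)⁻¹) := by noncomm_ring
  have e2 : (F + H)⁻¹ - F⁻¹ + F⁻¹ * H * F⁻¹
      = F⁻¹ * H * (F⁻¹ - (F + H)⁻¹) := by
    have : F⁻¹ * H * (F⁻¹ - (F + H)⁻¹)
        = F⁻¹ * H * F⁻¹ - F⁻¹ * (H * (F + H)⁻¹) := by noncomm_ring
    rw [this, ← e1]; abel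
  rw [e2, e1]; noncomm_ring

lemma hasFDerivAt_inv3 (F : M3) (hF : F.det ≠ 0) :
    HasFDerivAt (fun G : M3 => G⁻¹) (-(lmulRight F⁻¹ F⁻¹)) F := by
  have hU : IsUnit F.det := isUnit_iff_ne_zero.2 hF
  apply hasFDerivAt_iff_isLittleO_nhds_zero.2
  -- eventual invertibility
  have hdetc : Continuous fun H : M3 => (F + H).det :=
    (continuous_const.add continuous_id).matrix_det
  have hdet0 : Filter.Tendsto (fun H : M3 => (F + H).det) (nhds 0) (nhds F.det) := by
    have := hdetc.tendsto 0
    simpa using this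
  have hevU : ∀ᶠ H : M3 in nhds 0, IsUnit (F + H).det := by
    filter_upwards [hdet0.eventually_ne hF] with H h
    exact isUnit_iff_ne_zero.2 h
  -- eventual norm bound on (F+H)⁻¹
  have hinvc : ContinuousAt (fun G : M3 => G⁻¹) F := by
    refine continuousAt_matrix_inv F ?_
    have : (Ring.inverse : ℝ → ℝ) = fun x => x⁻¹ := by
      funext x; exact Ring.inverse_eq_inv x
    rw [this]
    exact (continuousAt_id.inv₀ hF)
  have htend : Filter.Tendsto (fun H : M3 => (F + H)⁻¹) (nhds 0) (nhds F⁻¹) := by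
    have h1 : Filter.Tendsto (fun H : M3 => F + H) (nhds 0) (nhds F) := by
      have hc : Continuous fun H : M3 => F + H := continuous_const.add continuous_id
      simpa using hc.tendsto (0 : M3)
    exact hinvc.tendsto.comp h1
  have hevN : ∀ᶠ H : M3 in nhds 0, ‖(F + H)⁻¹‖ ≤ ‖F⁻¹‖ + 1 := by
    have := htend.norm.eventually_le_const (lt_add_one ‖F⁻¹‖)
    filter_upwards [this] with H h using h
  -- big-O bound
  have hbigO : (fun H : M3 => (F + H)⁻¹ - F⁻¹ - (-(lmulRight F⁻¹ F⁻¹)) H)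
      =O[nhds 0] fun H : M3 => ‖H‖ ^ 2 := by
    refine Asymptotics.IsBigO.of_bound (81 * ‖F⁻¹‖ * ‖F⁻¹‖ * (‖F⁻¹‖ + 1)) ?_
    filter_upwards [hevU, hevN] with H hUH hNH
    have key := inv_key F H hU hUH
    have h0 : (F + H)⁻¹ - F⁻¹ - (-(lmulRight F⁻¹ F⁻¹)) H
        = F⁻¹ * (H * (F⁻¹ * (H * (F + H)⁻¹))) := by
      simpa [sub_neg_eq_add] using key
    rw [h0]
    have hK : (0:ℝ) ≤ ‖F⁻¹‖ := norm_nonneg _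
    have hH : (0:ℝ) ≤ ‖H‖ := norm_nonneg _
    have hN0 : (0:ℝ) ≤ ‖(F + H)⁻¹‖ := norm_nonneg _
    have b1 : ‖H * (F + H)⁻¹‖ ≤ 3 * ‖H‖ * ‖(F + H)⁻¹‖ := norm_mul_le3 _ _
    have b2 : ‖F⁻¹ * (H * (F + H)⁻¹)‖ ≤ 3 * ‖F⁻¹‖ * ‖H * (F + H)⁻¹‖ := norm_mul_le3 _ _
    have b3 : ‖H * (F⁻¹ * (H * (F + H)⁻¹))‖
        ≤ 3 * ‖H‖ * ‖F⁻¹ * (H * (F + H)⁻¹)‖ := norm_mul_le3 _ _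
    have b4 : ‖F⁻¹ * (H * (F⁻¹ * (H * (F + H)⁻¹)))‖
        ≤ 3 * ‖F⁻¹‖ * ‖H * (F⁻¹ * (H * (F + H)⁻¹))‖ := norm_mul_le3 _ _
    have hnorm : ‖(‖H‖ ^ 2 : ℝ)‖ = ‖H‖ ^ 2 := by
      rw [Real.norm_eq_abs, abs_of_nonneg (by positivity)]
    rw [hnorm]
    have t1 : ‖H * (F + H)⁻¹‖ ≤ 3 * ‖H‖ * (‖F⁻¹‖ + 1) :=
      b1.trans (mul_le_mul_of_nonneg_left hNH (by positivity))
    have t2 : ‖F⁻¹ * (H * (F + H)⁻¹)‖ ≤ 3 * ‖F⁻¹‖ * (3 * ‖H‖ * (‖F⁻¹‖ + 1)) :=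
      b2.trans (mul_le_mul_of_nonneg_left t1 (by positivity))
    have t3 : ‖H * (F⁻¹ * (H * (F + H)⁻¹))‖
        ≤ 3 * ‖H‖ * (3 * ‖F⁻¹‖ * (3 * ‖H‖ * (‖F⁻¹‖ + 1))) :=
      b3.trans (mul_le_mul_of_nonneg_left t2 (by positivity))
    have t4 : ‖F⁻¹ * (H * (F⁻¹ * (H * (F + H)⁻¹)))‖
        ≤ 3 * ‖F⁻¹‖ * (3 * ‖H‖ * (3 * ‖F⁻¹‖ * (3 * ‖H‖ * (‖F⁻¹‖ + 1)))) :=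
      b4.trans (mul_le_mul_of_nonneg_left t3 (by positivity))
    calc ‖F⁻¹ * (H * (F⁻¹ * (H * (F + H)⁻¹)))‖
        ≤ 3 * ‖F⁻¹‖ * (3 * ‖H‖ * (3 * ‖F⁻¹‖ * (3 * ‖H‖ * (‖F⁻¹‖ + 1)))) := t4
      _ = 81 * ‖F⁻¹‖ * ‖F⁻¹‖ * (‖F⁻¹‖ + 1) * ‖H‖ ^ 2 := by ring
  exact hbigO.trans_isLittleO (Asymptotics.isLittleO_norm_pow_id one_lt_two)

/-- The determinant on 3×3 matrices as a continuous multilinear map of the rows. -/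
def detCM : ContinuousMultilinearMap ℝ (fun _ : Fin 3 => (Fin 3 → ℝ)) ℝ :=
  MultilinearMap.mkContinuous
    ((Matrix.detRowAlternating : AlternatingMap ℝ (Fin 3 → ℝ) ℝ (Fin 3)).toMultilinearMap) 6
    (by
      intro m
      have h : ∀ i j, |m i j| ≤ ‖m i‖ := fun i j => by
        simpa [Real.norm_eq_abs] using norm_le_pi_norm (m i) j
      have ha : (0:ℝ) ≤ ‖m 0‖ := norm_nonneg _
      have habs : ∀ j₀ j₁ j₂ : Fin 3,
          |m 0 j₀ * m 1 j₁ * m 2 j₂| ≤ ‖m 0‖ * ‖m 1‖ * ‖m 2‖ := by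
        intro j₀ j₁ j₂
        rw [abs_mul, abs_mul]
        exact mul_le_mul (mul_le_mul (h 0 j₀) (h 1 j₁) (abs_nonneg _) ha)
          (h 2 j₂) (abs_nonneg _) (by positivity)
      have hdet : ((Matrix.detRowAlternating :
          AlternatingMap ℝ (Fin 3 → ℝ) ℝ (Fin 3)).toMultilinearMap) m
          = Matrix.det (Matrix.of m) := rfl
      rw [hdet, Matrix.det_fin_three, Real.norm_eq_abs, Fin.prod_univ_three]
      simp only [Matrix.of_apply]
      rw [abs_le]
      constructor <;>
        linarith [(abs_le.1 (habs 0 1 2)).1, (abs_le.1 (habs 0 1 2)).2,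
          (abs_le.1 (habs 0 2 1)).1, (abs_le.1 (habs 0 2 1)).2,
          (abs_le.1 (habs 1 0 2)).1, (abs_le.1 (habs 1 0 2)).2,
          (abs_le.1 (habs 1 2 0)).1, (abs_le.1 (habs 1 2 0)).2,
          (abs_le.1 (habs 2 0 1)).1, (abs_le.1 (habs 2 0 1)).2,
          (abs_le.1 (habs 2 1 0)).1, (abs_le.1 (habs 2 1 0)).2])

lemma hasFDerivAt_det3 (F : M3) :
    HasFDerivAt (fun G : M3 => G.det) (detCM.linearDeriv F) F :=
  detCM.hasFDerivAt F

lemma detCM_linearDeriv_apply (F H : M3) :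
    detCM.linearDeriv F H = (F.adjugate * H).trace := by
  refine (ContinuousMultilinearMap.linearDeriv_apply _ _ _).trans ?_
  have e : ∀ i : Fin 3, detCM (Function.update F i (H i))
      = ((F.adjugate)ᵀ.mulVec (H i)) i := by
    intro i
    have h1 : detCM (Function.update F i (H i)) = (F.updateRow i (H i)).det := rfl
    rw [h1]
    calc (F.updateRow i (H i)).det
        = (Fᵀ.updateCol i (H i)).det := by
          rw [Matrix.updateCol_transpose, Matrix.det_transpose]
      _ = Matrix.cramer Fᵀ (H i) i := by rw [Matrix.cramer_apply]
      _ = (Fᵀ.adjugate.mulVec (H i)) i := by rw [Matrix.cramer_eq_adjugate_mulVec]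
      _ = ((F.adjugate)ᵀ.mulVec (H i)) i := by rw [Matrix.adjugate_transpose]
  simp only [e, Matrix.mulVec, dotProduct, Matrix.transpose_apply,
    Matrix.trace, Matrix.diag_apply, Matrix.mul_apply]
  exact Finset.sum_comm

/-- `H ↦ trace (A * H)` as a continuous linear map. -/
def traceCLM (A : M3) : M3 →L[ℝ] ℝ :=
  LinearMap.toContinuousLinearMap
    { toFun := fun H => (A * H).trace
      map_add' := fun H K => by simp [Matrix.mul_add]
      map_smul' := fun c H => by simp [Matrix.mul_smul] }

@[simp] lemma traceCLM_apply (A H : M3) : traceCLM A H = (A * H).trace := rfl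

lemma hasFDerivAt_det3' (F : M3) (hF : F.det ≠ 0) :
    HasFDerivAt (fun G : M3 => G.det) (F.det • traceCLM F⁻¹) F := by
  have hEq : (F.det • traceCLM F⁻¹ : M3 →L[ℝ] ℝ) = detCM.linearDeriv F := by
    refine ContinuousLinearMap.ext fun H => Eq.trans ?_ (detCM_linearDeriv_apply F H).symm
    have hFi : F⁻¹ = (F.det)⁻¹ • F.adjugate := by
      rw [Matrix.inv_def, Ring.inverse_eq_inv]
    simp only [ContinuousLinearMap.smul_apply, traceCLM_apply, hFi,
      Matrix.smul_mul, Matrix.trace_smul, smul_eq_mul]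
    field_simp
  have h := hasFDerivAt_det3 F
  rwa [← hEq] at h

/-- Transpose as a continuous linear map. -/
def transposeCLM : M3 →L[ℝ] M3 :=
  LinearMap.toContinuousLinearMap
    { toFun := fun A => Aᵀ
      map_add' := fun A B => Matrix.transpose_add A B
      map_smul' := fun c A => Matrix.transpose_smul c A }

@[simp] lemma transposeCLM_apply (A : M3) : transposeCLM A = Aᵀ := rfl

end

end PiolaAux

/-- The neo-Hookean Piola–Kirchhoff stress map
`G ↦ P(G) = λ ln(det G) G⁻ᵀ + μ(G − G⁻ᵀ)` is Fréchet differentiable at any `F`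
with `det F > 0`, and its derivative applied to `H` equals
`λ trace(F⁻¹·H) F⁻ᵀ − λ ln(det F) F⁻ᵀ·Hᵀ·F⁻ᵀ + μ(H + F⁻ᵀ·Hᵀ·F⁻ᵀ)`:
the exact Piola stress tangent `𝔸 = ∂P/∂F`. -/
theorem piola_stress_tangent
    (F : Matrix (Fin 3) (Fin 3) ℝ) (hF : 0 < F.det) (lam mu : ℝ) :
    ∃ D : Matrix (Fin 3) (Fin 3) ℝ →L[ℝ] Matrix (Fin 3) (Fin 3) ℝ,
      HasFDerivAt
        (fun G : Matrix (Fin 3) (Fin 3) ℝ =>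
          (lam * Real.log G.det) • (G⁻¹)ᵀ + mu • (G - (G⁻¹)ᵀ))
        D F ∧
      ∀ H : Matrix (Fin 3) (Fin 3) ℝ,
        D H = (lam * (F⁻¹ * H).trace) • (F⁻¹)ᵀ
              - (lam * Real.log F.det) • ((F⁻¹)ᵀ * Hᵀ * (F⁻¹)ᵀ)
              + mu • (H + (F⁻¹)ᵀ * Hᵀ * (F⁻¹)ᵀ) := by
  classical
  have hFne : F.det ≠ 0 := ne_of_gt hF
  have hinv := PiolaAux.hasFDerivAt_inv3 F hFne
  have hdet := PiolaAux.hasFDerivAt_det3' F hFne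
  have hlog : HasDerivAt Real.log (F.det)⁻¹ F.det := Real.hasDerivAt_log hFne
  have hlogdet : HasFDerivAt (fun G : Matrix (Fin 3) (Fin 3) ℝ => Real.log G.det)
      ((F.det)⁻¹ • (F.det • PiolaAux.traceCLM F⁻¹)) F := hlog.comp_hasFDerivAt F hdet
  have hc : HasFDerivAt (fun G : Matrix (Fin 3) (Fin 3) ℝ => lam * Real.log G.det)
      (lam • ((F.det)⁻¹ • (F.det • PiolaAux.traceCLM F⁻¹))) F := hlogdet.const_mul lam
  have hinvT : HasFDerivAt (fun G : Matrix (Fin 3) (Fin 3) ℝ => (G⁻¹)ᵀ)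
      (PiolaAux.transposeCLM.comp (-(PiolaAux.lmulRight F⁻¹ F⁻¹))) F :=
    PiolaAux.transposeCLM.hasFDerivAt.comp F hinv
  have h1 := hc.smul hinvT
  have h2 := ((hasFDerivAt_id F).sub hinvT).const_smul mu
  refine ⟨_, h1.add h2, ?_⟩
  intro H
  have ht : (F⁻¹ * H * F⁻¹)ᵀ = (F⁻¹)ᵀ * Hᵀ * (F⁻¹)ᵀ := by
    rw [Matrix.transpose_mul, Matrix.transpose_mul, Matrix.mul_assoc]
  change (lam * Real.log F.det) • PiolaAux.transposeCLM (-(F⁻¹ * H * F⁻¹))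
      + (lam * ((F.det)⁻¹ * (F.det * PiolaAux.traceCLM F⁻¹ H))) • (F⁻¹)ᵀ
      + mu • (H - PiolaAux.transposeCLM (-(F⁻¹ * H * F⁻¹))) = _
  simp only [ContinuousLinearMap.add_apply, ContinuousLinearMap.smul_apply,
    ContinuousLinearMap.coe_smul', Pi.smul_apply, ContinuousLinearMap.smulRight_apply,
    ContinuousLinearMap.comp_apply, ContinuousLinearMap.neg_apply,
    ContinuousLinearMap.sub_apply, ContinuousLinearMap.coe_id', id_eq,
    PiolaAux.lmulRight_apply, PiolaAux.transposeCLM_apply, PiolaAux.traceCLM_apply,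
    Matrix.transpose_neg, ht, smul_eq_mul]
  have hscal : lam * ((F.det)⁻¹ * (F.det * (F⁻¹ * H).trace)) = lam * (F⁻¹ * H).trace := by
    field_simp
  rw [hscal]
  module
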